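/- With q*(w) defined by the greedy recursion along a viable ranking ρ, one has G q*(w) = w for every w ∈ ℝ₊^I, i.e. q*(w) ∈ Q^s(w). -/

import Mathlib

/-- The greedy recursive selection `q*` produces a queue-length vector
consistent with the workload: `G q*(w) = w`, i.e. `q*(w) ∈ Q^s(w)`. -/
theorem stmt_13 (I J m : ℕ) (K : Matrix (Fin I) (Fin J) ℝ)
    (hK01 : ∀ i j, K i j = 0 ∨ K i j = 1)
    (hKcols : ∀ j j' : Fin J, (∀ i, K i j = K i j') → j = j')
    (hKnz : ∀ j, ∃ i, K i j = 1)
    (hloc : ∀ i : Fin I, ∃ j : Fin J, (∑ i', K i' j) = 1 ∧ K i j = 1)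
    (μ : Fin J → ℝ) (hμ : ∀ j, 0 < μ j)
    (G : Matrix (Fin I) (Fin J) ℝ) (hG : ∀ i j, G i j = K i j / μ j)
    (Sp : Finset (Fin J))
    (hSpS1 : ∀ j ∈ Sp, (∑ i, K i j) ≠ 1)
    (ρ : Fin m → Fin J) (hρinj : Function.Injective ρ)
    (hρSp : ∀ k : Fin m, ρ k ∉ Sp)
    (hρS1 : ∀ k : Fin m, (∑ i, K i (ρ k)) ≠ 1)
    (ihat : Fin J → Fin I)
    (hihat : ∀ j, (∑ i, K i j) = 1 → K (ihat j) j = 1)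
    (hpart : ∀ j : Fin J, j ∈ Sp ∨ (∃ k : Fin m, ρ k = j) ∨ (∑ i, K i j) = 1)
    (qs : (Fin I → ℝ) → Fin J → ℝ)
    (hqsP : ∀ w, ∀ j ∈ Sp, qs w j = 0)
    (hqsM : ∀ w : Fin I → ℝ, ∀ k : Fin m, qs w (ρ k) =
      μ (ρ k) * sInf {x : ℝ | ∃ i : Fin I, K i (ρ k) = 1 ∧
        x = w i - ∑ l ∈ Finset.univ.filter (fun l : Fin m => l < k),
              G i (ρ l) * qs w (ρ l)})
    (hqsS : ∀ w : Fin I → ℝ, ∀ j : Fin J, j ∉ Sp → (∀ k : Fin m, ρ k ≠ j) →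
      (∑ i, K i j) = 1 →
      qs w j = μ j * (w (ihat j) - ∑ k : Fin m, G (ihat j) (ρ k) * qs w (ρ k))) :
    ∀ w : Fin I → ℝ, (∀ i, 0 ≤ w i) →
      G.mulVec (qs w) = w ∧ (∀ j, 0 ≤ qs w j) ∧ (∀ j ∈ Sp, qs w j = 0) := by
  intro w hw
  have hGK : ∀ i j, K i j = 0 → G i j = 0 := fun i j h => by simp [hG, h]
  have huniq : ∀ (j : Fin J), (∑ i, K i j) = 1 → ∀ i i', K i j = 1 → K i' j = 1 → i = i' := by
    intro j hs i i' h h'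
    by_contra hne
    have hsub := Finset.sum_le_sum_of_subset_of_nonneg
      (s := ({i, i'} : Finset (Fin I))) (t := Finset.univ) (f := fun x => K x j)
      (Finset.subset_univ _)
      (fun x _ _ => by rcases hK01 x j with h0 | h0 <;> simp [h0])
    rw [Finset.sum_pair hne, h, h', hs] at hsub
    linarith
  set F : ℕ → Fin I → ℝ := fun n i =>
    w i - ∑ l ∈ Finset.univ.filter (fun l : Fin m => (l : ℕ) < n), G i (ρ l) * qs w (ρ l)
    with hFdef
  have hqsM' : ∀ k : Fin m, qs w (ρ k) =
      μ (ρ k) * sInf {x : ℝ | ∃ i : Fin I, K i (ρ k) = 1 ∧ x = F (k : ℕ) i} := by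
    intro k
    rw [hqsM w k]
    congr 1
  have hSfin : ∀ k : Fin m, ({x : ℝ | ∃ i, K i (ρ k) = 1 ∧ x = F (k : ℕ) i}).Finite := by
    intro k
    apply (Set.finite_range (F (k : ℕ))).subset
    rintro x ⟨i, _, rfl⟩
    exact ⟨i, rfl⟩
  have hSne : ∀ k : Fin m, ({x : ℝ | ∃ i, K i (ρ k) = 1 ∧ x = F (k : ℕ) i}).Nonempty := by
    intro k
    obtain ⟨i, hi⟩ := hKnz (ρ k)
    exact ⟨F (k : ℕ) i, i, hi, rfl⟩
  have hge : ∀ n, m ≤ n →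
      Finset.univ.filter (fun l : Fin m => (l : ℕ) < n) = Finset.univ := by
    intro n h
    ext l
    simp only [Finset.mem_filter, Finset.mem_univ, true_and, iff_true]
    exact lt_of_lt_of_le l.isLt h
  have hstep : ∀ n, ∀ (h : n < m), ∀ i,
      F (n + 1) i = F n i - G i (ρ ⟨n, h⟩) * qs w (ρ ⟨n, h⟩) := by
    intro n h i
    have hnotmem : (⟨n, h⟩ : Fin m) ∉ Finset.univ.filter (fun l : Fin m => (l : ℕ) < n) := by
      simp
    have hins : Finset.univ.filter (fun l : Fin m => (l : ℕ) < n + 1)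
        = insert (⟨n, h⟩ : Fin m) (Finset.univ.filter (fun l : Fin m => (l : ℕ) < n)) := by
      ext l
      simp only [Finset.mem_filter, Finset.mem_univ, true_and, Finset.mem_insert,
        Nat.lt_succ_iff_lt_or_eq, Fin.ext_iff]
      tauto
    simp only [hFdef, hins, Finset.sum_insert hnotmem]
    ring
  have hinv : ∀ n, ∀ i, 0 ≤ F n i := by
    intro n
    induction n with
    | zero =>
      intro i
      simp only [hFdef, Nat.not_lt_zero, Finset.filter_false, Finset.sum_empty, sub_zero]
      exact hw i
    | succ n ih =>
      intro i
      by_cases h : n < m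
      · have hbdd := (hSfin ⟨n, h⟩).bddBelow
        obtain ⟨i0, _, h0⟩ := (hSne ⟨n, h⟩).csInf_mem (hSfin ⟨n, h⟩)
        have hq0 : 0 ≤ qs w (ρ ⟨n, h⟩) := by
          rw [hqsM' ⟨n, h⟩]
          exact mul_nonneg (hμ _).le (h0 ▸ ih i0)
        rw [hstep n h i]
        rcases hK01 i (ρ ⟨n, h⟩) with h0' | h1'
        · rw [hGK i _ h0', zero_mul, sub_zero]
          exact ih i
        · have hle : sInf {x : ℝ | ∃ i', K i' (ρ (⟨n, h⟩ : Fin m)) = 1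
              ∧ x = F ((⟨n, h⟩ : Fin m) : ℕ) i'} ≤ F n i := csInf_le hbdd ⟨i, h1', rfl⟩
          have hGq : G i (ρ ⟨n, h⟩) * qs w (ρ ⟨n, h⟩)
              = sInf {x : ℝ | ∃ i', K i' (ρ (⟨n, h⟩ : Fin m)) = 1
                ∧ x = F ((⟨n, h⟩ : Fin m) : ℕ) i'} := by
            rw [hqsM' ⟨n, h⟩, hG, h1', one_div, inv_mul_cancel_left₀ (hμ _).ne']
          rw [hGq]
          have := ih i
          linarith
      · push_neg at h
        have heq : F (n + 1) i = F n i := by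
          simp only [hFdef, hge n h, hge (n + 1) (le_trans h (Nat.le_succ n))]
        rw [heq]
        exact ih i
  have hqnonneg : ∀ j, 0 ≤ qs w j := by
    intro j
    rcases hpart j with hj | ⟨k, rfl⟩ | hj
    · rw [hqsP w j hj]
    · rw [hqsM' k]
      obtain ⟨i0, _, h0⟩ := (hSne k).csInf_mem (hSfin k)
      exact mul_nonneg (hμ _).le (h0 ▸ hinv (k : ℕ) i0)
    · have hjSp : j ∉ Sp := fun hmem => hSpS1 j hmem hj
      have hjρ : ∀ k, ρ k ≠ j := fun k he => hρS1 k (he ▸ hj)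
      rw [hqsS w j hjSp hjρ hj]
      have hFm : w (ihat j) - ∑ k : Fin m, G (ihat j) (ρ k) * qs w (ρ k) = F m (ihat j) := by
        simp only [hFdef, hge m le_rfl]
      rw [hFm]
      exact mul_nonneg (hμ _).le (hinv m _)
  have hrow : ∀ i, ∑ j, G i j * qs w j = w i := by
    intro i
    obtain ⟨j0, hj0s, hj0i⟩ := hloc i
    have hii : ihat j0 = i := huniq j0 hj0s _ _ (hihat j0 hj0s) hj0i
    have hj0ρ : ∀ k, ρ k ≠ j0 := fun k he => hρS1 k (he ▸ hj0s)
    have hj0img : j0 ∉ Finset.image ρ Finset.univ := by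
      simp only [Finset.mem_image, Finset.mem_univ, true_and, not_exists]
      exact hj0ρ
    have hzero : ∀ j ∈ Finset.univ,
        j ∉ insert j0 (Finset.image ρ Finset.univ) → G i j * qs w j = 0 := by
      intro j _ hjT
      simp only [Finset.mem_insert, Finset.mem_image, Finset.mem_univ, true_and,
        not_or, not_exists] at hjT
      obtain ⟨hne, hnρ⟩ := hjT
      rcases hpart j with hj | ⟨k, hk⟩ | hj
      · rw [hqsP w j hj, mul_zero]
      · exact absurd hk (hnρ k)
      · rcases hK01 i j with h0 | h1
        · rw [hGK i j h0, zero_mul]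
        · exfalso
          apply hne
          apply hKcols j j0
          intro i'
          rcases hK01 i' j with a | a <;> rcases hK01 i' j0 with b | b
          · rw [a, b]
          · exfalso
            have : i' = i := huniq j0 hj0s i' i b hj0i
            rw [this, h1] at a
            norm_num at a
          · exfalso
            have : i' = i := huniq j hj i' i a h1
            rw [this, hj0i] at b
            norm_num at b
          · rw [a, b]
    have hsum : ∑ j, G i j * qs w j
        = ∑ j ∈ insert j0 (Finset.image ρ Finset.univ), G i j * qs w j :=
      (Finset.sum_subset (Finset.subset_univ _) hzero).symm
    rw [hsum, Finset.sum_insert hj0img,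
      Finset.sum_image (fun a _ b _ h => hρinj h)]
    have hGj0 : G i j0 = 1 / μ j0 := by rw [hG, hj0i]
    rw [hqsS w j0 (fun hmem => hSpS1 j0 hmem hj0s) hj0ρ hj0s, hGj0, hii]
    rw [one_div, inv_mul_cancel_left₀ (hμ j0).ne']
    ring
  refine ⟨?_, hqnonneg, hqsP w⟩
  funext i
  simp only [Matrix.mulVec, dotProduct]
  exact hrow i
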